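/- For positive integers m, l, the dimension of the space of homogeneous quasi-invariant polynomials of even degree n > 0 for C₂(m,l) that are even in each variable (only even powers of x and y appear) equals n/2. -/

import Mathlib

open MvPolynomial

/-- Evaluation at the point `(x, y) ∈ ℂ²`, as a linear map on polynomials. -/
noncomputable def evalAt (x y : ℂ) : MvPolynomial (Fin 2) ℂ →ₗ[ℂ] ℂ :=
  (MvPolynomial.aeval ![x, y]).toLinearMap

/-- The directional derivative `a·∂_x + b·∂_y` on polynomials in two variables. -/
noncomputable def dirD (a b : ℂ) : Module.End ℂ (MvPolynomial (Fin 2) ℂ) :=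
  a • (MvPolynomial.pderiv 0).toLinearMap + b • (MvPolynomial.pderiv 1).toLinearMap

/-- The submodule of quasi-invariants of the configuration `C₂(m,l)`: the line `x = 0` carries
multiplicity `m`, the line `y = 0` multiplicity `l`, and the lines `ξx ± y = 0` (normal vectors
`ξe₁ ± e₂`) multiplicity `1`, where `ξ² = (2l+1)/(2m+1)`. A polynomial `q` is quasi-invariant
if the odd normal derivatives `∂_α^{2r-1} q`, `r = 1,...,m_α`, vanish on each line. -/
noncomputable def quasiC (m l : ℕ) (ξ : ℂ) : Submodule ℂ (MvPolynomial (Fin 2) ℂ) :=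
  (⨅ r ∈ Finset.Icc 1 m, ⨅ y : ℂ,
    LinearMap.ker ((evalAt 0 y).comp ((dirD 1 0 ^ (2 * r - 1) : Module.End ℂ _) :
      MvPolynomial (Fin 2) ℂ →ₗ[ℂ] MvPolynomial (Fin 2) ℂ))) ⊓
  (⨅ r ∈ Finset.Icc 1 l, ⨅ x : ℂ,
    LinearMap.ker ((evalAt x 0).comp ((dirD 0 1 ^ (2 * r - 1) : Module.End ℂ _) :
      MvPolynomial (Fin 2) ℂ →ₗ[ℂ] MvPolynomial (Fin 2) ℂ))) ⊓
  (⨅ t : ℂ, LinearMap.ker ((evalAt t (-(ξ * t))).comp (dirD ξ 1))) ⊓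
  (⨅ t : ℂ, LinearMap.ker ((evalAt t (ξ * t)).comp (dirD ξ (-1))))

/-- The submodule of polynomials supported on a set `s` of monomials. -/
noncomputable def suppOn (s : Set (Fin 2 →₀ ℕ)) : Submodule ℂ (MvPolynomial (Fin 2) ℂ) where
  carrier := {q | ∀ d, d ∉ s → MvPolynomial.coeff d q = 0}
  add_mem' := by
    intro p q hp hq d hd
    simp [MvPolynomial.coeff_add, hp d hd, hq d hd]
  zero_mem' := by intro d hd; simp
  smul_mem' := by
    intro c q hq d hd
    simp [MvPolynomial.coeff_smul, hq d hd]

/- ### auxiliary material -/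

lemma aeval2_monomial (t u c : ℂ) (d : Fin 2 →₀ ℕ) :
    MvPolynomial.aeval ![t,u] (monomial d c) = c * t ^ (d 0) * u ^ (d 1) := by
  rw [aeval_monomial, Finsupp.prod_fintype _ _ (by simp)]
  simp [Fin.prod_univ_two, mul_assoc, Algebra.algebraMap_self]

lemma fin2_finsupp (d : Fin 2 →₀ ℕ) : d = Finsupp.single 0 (d 0) + Finsupp.single 1 (d 1) := by
  ext i
  fin_cases i <;> simp

/-- exponent vector of the basis monomials -/
noncomputable def DD (n i : ℕ) : Fin 2 →₀ ℕ :=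
  Finsupp.single 0 (2*i) + Finsupp.single 1 (n - 2*i)

lemma DD_zero (n i : ℕ) : DD n i 0 = 2*i := by
  simp [DD, Finsupp.single_apply]

lemma DD_one (n i : ℕ) : DD n i 1 = n - 2*i := by
  simp [DD, Finsupp.single_apply]

/-- the basis monomials -/
noncomputable def eC (n i : ℕ) : MvPolynomial (Fin 2) ℂ := X 0 ^ (2*i) * X 1 ^ (n - 2*i)

lemma eC_eq_monomial (n i : ℕ) : eC n i = monomial (DD n i) 1 := by
  rw [eC, DD, X_pow_eq_monomial, X_pow_eq_monomial, monomial_mul, mul_one]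

lemma coeff_eC (n i : ℕ) (d : Fin 2 →₀ ℕ) :
    coeff d (eC n i) = if DD n i = d then 1 else 0 := by
  rw [eC_eq_monomial, coeff_monomial]

lemma evalzero_pderiv_iter (y : ℂ) : ∀ (j : ℕ) (d : Fin 2 →₀ ℕ) (c : ℂ), j ≠ d 0 →
    evalAt 0 y ((dirD 1 0 ^ j : Module.End ℂ _) (monomial d c)) = 0 := by
  intro j
  induction j with
  | zero =>
    intro d c h
    simp only [pow_zero, Module.End.one_apply, evalAt, AlgHom.toLinearMap_apply, aeval2_monomial]
    rw [zero_pow (Ne.symm h)]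
    ring
  | succ j ih =>
    intro d c h
    have hstep : (dirD 1 0 ^ (j+1) : Module.End ℂ _) (monomial d c)
        = (dirD 1 0 ^ j : Module.End ℂ _) (dirD 1 0 (monomial d c)) := by
      rw [pow_succ, Module.End.mul_apply]
    rw [hstep]
    have : dirD 1 0 (monomial d c) = monomial (d - Finsupp.single 0 1) (c * d 0) := by
      simp [dirD, pderiv_monomial]
    rw [this]
    rcases Nat.eq_zero_or_pos (d 0) with h0 | h0
    · rw [h0]; norm_num
    · apply ih
      rw [Finsupp.tsub_apply, Finsupp.single_eq_same]
      omega

lemma evalzero_pderiv_iter' (x : ℂ) : ∀ (j : ℕ) (d : Fin 2 →₀ ℕ) (c : ℂ), j ≠ d 1 →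
    evalAt x 0 ((dirD 0 1 ^ j : Module.End ℂ _) (monomial d c)) = 0 := by
  intro j
  induction j with
  | zero =>
    intro d c h
    simp only [pow_zero, Module.End.one_apply, evalAt, AlgHom.toLinearMap_apply, aeval2_monomial]
    rw [zero_pow (Ne.symm h)]
    ring
  | succ j ih =>
    intro d c h
    have hstep : (dirD 0 1 ^ (j+1) : Module.End ℂ _) (monomial d c)
        = (dirD 0 1 ^ j : Module.End ℂ _) (dirD 0 1 (monomial d c)) := by
      rw [pow_succ, Module.End.mul_apply]
    rw [hstep]
    have : dirD 0 1 (monomial d c) = monomial (d - Finsupp.single 1 1) (c * d 1) := by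
      simp [dirD, pderiv_monomial]
    rw [this]
    rcases Nat.eq_zero_or_pos (d 1) with h0 | h0
    · rw [h0]; norm_num
    · apply ih
      rw [Finsupp.tsub_apply, Finsupp.single_eq_same]
      omega

lemma eval_dirD_emon (α β t u : ℂ) (a b : ℕ) :
    evalAt t u (dirD α β ((X 0 : MvPolynomial (Fin 2) ℂ)^a * X 1^b)) =
      α * a * t^(a-1) * u^b + β * b * t^a * u^(b-1) := by
  rw [show ((X 0 : MvPolynomial (Fin 2) ℂ)^a * X 1^b)
      = monomial (Finsupp.single 0 a + Finsupp.single 1 b) 1 by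
    rw [X_pow_eq_monomial, X_pow_eq_monomial, monomial_mul, mul_one]]
  simp only [dirD, evalAt, LinearMap.add_apply, LinearMap.smul_apply,
    AlgHom.toLinearMap_apply, map_add, map_smul, Derivation.coeFn_coe, pderiv_monomial]
  rw [aeval2_monomial, aeval2_monomial]
  have h00 : ((Finsupp.single 0 a + Finsupp.single 1 b : Fin 2 →₀ ℕ)) 0 = a := by
    simp [Finsupp.single_apply]
  have h11 : ((Finsupp.single 0 a + Finsupp.single 1 b : Fin 2 →₀ ℕ)) 1 = b := by
    simp [Finsupp.single_apply]
  have k0 : ((Finsupp.single 0 a + Finsupp.single 1 b - Finsupp.single 0 1 : Fin 2 →₀ ℕ)) 0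
      = a - 1 := by
    simp [Finsupp.tsub_apply, Finsupp.single_apply]
  have k1 : ((Finsupp.single 0 a + Finsupp.single 1 b - Finsupp.single 0 1 : Fin 2 →₀ ℕ)) 1
      = b := by
    simp [Finsupp.tsub_apply, Finsupp.single_apply]
  have m0 : ((Finsupp.single 0 a + Finsupp.single 1 b - Finsupp.single 1 1 : Fin 2 →₀ ℕ)) 0
      = a := by
    simp [Finsupp.tsub_apply, Finsupp.single_apply]
  have m1 : ((Finsupp.single 0 a + Finsupp.single 1 b - Finsupp.single 1 1 : Fin 2 →₀ ℕ)) 1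
      = b - 1 := by
    simp [Finsupp.tsub_apply, Finsupp.single_apply]
  rw [h00, h11, k0, k1, m0, m1]
  simp only [smul_eq_mul, one_mul]
  ring

/-- the coefficients of the single linear condition -/
noncomputable def cC (n : ℕ) (ξ : ℂ) (i : ℕ) : ℂ :=
  ((2*i : ℕ) : ℂ) * ξ^(n-2*i+1) - ((n-2*i : ℕ) : ℂ) * ξ^(n-2*i-1)

lemma mirrorB (ξ t : ℂ) (n i : ℕ) (hn : Even n) (h2i : 2*i ≤ n) (hn0 : 0 < n) :
    evalAt t (ξ*t) (dirD ξ (-1) (eC n i)) = t^(n-1) * cC n ξ i := by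
  rw [eC, cC, eval_dirD_emon]
  rcases Nat.lt_or_ge i 1 with hi | hi
  · interval_cases i
    simp only [Nat.mul_zero, Nat.sub_zero, Nat.cast_zero, pow_zero, mul_zero, zero_mul,
      mul_one, mul_pow]
    ring
  · rcases eq_or_lt_of_le h2i with he | hlt
    · rw [he]
      simp only [Nat.sub_self, Nat.cast_zero, pow_zero, mul_one, zero_mul, mul_zero,
        Nat.zero_sub, zero_mul, add_zero]
      norm_num
      ring
    · have h1 : t^(2*i-1) * t^(n-2*i) = t^(n-1) := by rw [← pow_add]; congr 1; omega
      have h2 : t^(2*i) * t^(n-2*i-1) = t^(n-1) := by rw [← pow_add]; congr 1; omega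
      have h3 : ξ^(n-2*i) * ξ = ξ^(n-2*i+1) := by rw [← pow_succ]
      rw [mul_pow, mul_pow]
      linear_combination (((2*i:ℕ):ℂ) * ξ^(n-2*i+1)) * h1 - (((n-2*i:ℕ):ℂ) * ξ^(n-2*i-1)) * h2
        + (((2*i:ℕ):ℂ) * t^(2*i-1) * t^(n-2*i)) * h3

lemma mirrorA (ξ t : ℂ) (n i : ℕ) (hn : Even n) (h2i : 2*i ≤ n) (hn0 : 0 < n) :
    evalAt t (-(ξ*t)) (dirD ξ 1 (eC n i)) = t^(n-1) * cC n ξ i := by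
  rw [eC, cC, eval_dirD_emon]
  obtain ⟨k, hk⟩ := hn
  have hev : Even (n - 2*i) := ⟨k - i, by omega⟩
  rw [Even.neg_pow hev]
  rcases Nat.lt_or_ge i 1 with hi | hi
  · interval_cases i
    have hodd : Odd (n - 2*0 - 1) := ⟨k - 1, by omega⟩
    rw [Odd.neg_pow hodd]
    simp only [Nat.mul_zero, Nat.sub_zero, Nat.cast_zero, pow_zero, mul_zero, zero_mul,
      mul_one, mul_pow]
    ring
  · rcases eq_or_lt_of_le h2i with he | hlt
    · rw [he]
      simp only [Nat.sub_self, Nat.cast_zero, pow_zero, mul_one, zero_mul, mul_zero,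
        Nat.zero_sub, zero_mul, add_zero]
      norm_num
      ring
    · have hodd : Odd (n - 2*i - 1) := ⟨k - i - 1, by omega⟩
      rw [Odd.neg_pow hodd]
      have h1 : t^(2*i-1) * t^(n-2*i) = t^(n-1) := by rw [← pow_add]; congr 1; omega
      have h2 : t^(2*i) * t^(n-2*i-1) = t^(n-1) := by rw [← pow_add]; congr 1; omega
      have h3 : ξ^(n-2*i) * ξ = ξ^(n-2*i+1) := by rw [← pow_succ]
      rw [mul_pow, mul_pow]
      linear_combination (((2*i:ℕ):ℂ) * ξ^(n-2*i+1)) * h1 - (((n-2*i:ℕ):ℂ) * ξ^(n-2*i-1)) * h2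
        + (((2*i:ℕ):ℂ) * t^(2*i-1) * t^(n-2*i)) * h3

/-- the parametrization of even–even homogeneous polynomials by coefficient vectors -/
noncomputable def PhiC (n k : ℕ) : (Fin (k+1) → ℂ) →ₗ[ℂ] MvPolynomial (Fin 2) ℂ where
  toFun a := ∑ i : Fin (k+1), a i • eC n i
  map_add' a b := by simp [add_smul, Finset.sum_add_distrib]
  map_smul' c a := by simp [mul_smul, Finset.smul_sum]

/-- the linear condition -/
noncomputable def psiC (n k : ℕ) (ξ : ℂ) : (Fin (k+1) → ℂ) →ₗ[ℂ] ℂ where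
  toFun a := ∑ i : Fin (k+1), a i * cC n ξ i
  map_add' a b := by simp [add_mul, Finset.sum_add_distrib]
  map_smul' c a := by simp [mul_assoc, Finset.mul_sum]

lemma fin2_deg (d : Fin 2 →₀ ℕ) : d.degree = d 0 + d 1 := by
  rw [Finsupp.degree_apply, Finset.sum_subset (Finset.subset_univ d.support)
    (fun i _ hi => Finsupp.notMem_support_iff.mp hi)]
  exact Fin.sum_univ_two d

/-- The dimension of the space of homogeneous quasi-invariants of even degree `n > 0` for
`C₂(m,l)` that contain only even powers of `x` and of `y` equals `n/2`. -/
theorem quasiC_even_even_dimension (m l : ℕ) (hm : 1 ≤ m) (hl : 1 ≤ l) (ξ : ℂ)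
    (hξ : ξ ^ 2 = (2 * (l : ℂ) + 1) / (2 * (m : ℂ) + 1)) (n : ℕ) (hn : Even n) (hn0 : 0 < n) :
    Module.finrank ℂ
        ↥(MvPolynomial.homogeneousSubmodule (Fin 2) ℂ n ⊓ quasiC m l ξ ⊓
          suppOn {d | Even (d 0) ∧ Even (d 1)}) = n / 2 := by
  have hl0 : (2 * (l : ℂ) + 1) ≠ 0 := by
    have : ((2*l+1 : ℕ) : ℂ) ≠ 0 := Nat.cast_ne_zero.mpr (by omega)
    push_cast at this
    exact this
  have hm0 : (2 * (m : ℂ) + 1) ≠ 0 := by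
    have : ((2*m+1 : ℕ) : ℂ) ≠ 0 := Nat.cast_ne_zero.mpr (by omega)
    push_cast at this
    exact this
  have hξ0 : ξ ≠ 0 := by
    intro h
    rw [h] at hξ
    rw [show ((0:ℂ)^2 = 0) by ring] at hξ
    rcases div_eq_zero_iff.mp hξ.symm with h1 | h1
    · exact hl0 h1
    · exact hm0 h1
  obtain ⟨w, hw⟩ := hn
  set k := n / 2 with hkdef
  have hnk : n = 2 * k := by omega
  -- the top coefficient is nonzero
  have hck : cC n ξ k = (n : ℂ) * ξ := by
    rw [cC, hnk]
    simp [Nat.sub_self]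
  have hckne : cC n ξ k ≠ 0 := by
    rw [hck]
    exact mul_ne_zero (Nat.cast_ne_zero.mpr (by omega)) hξ0
  -- injectivity of Phi
  have hPhi_coeff : ∀ (a : Fin (k+1) → ℂ) (d : Fin 2 →₀ ℕ),
      coeff d (PhiC n k a) = ∑ i : Fin (k+1), a i * (if DD n i.1 = d then 1 else 0) := by
    intro a d
    simp only [PhiC, LinearMap.coe_mk, AddHom.coe_mk]
    rw [coeff_sum]
    congr 1
    ext i
    rw [coeff_smul, coeff_eC]
    simp [smul_eq_mul]
  have hDD_inj : ∀ i j : Fin (k+1), DD n i.1 = DD n j.1 → i = j := by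
    intro i j hij
    have := congrArg (fun f : Fin 2 →₀ ℕ => f 0) hij
    simp only [DD_zero] at this
    exact Fin.ext (by omega)
  have hPhi_coeff_at : ∀ (a : Fin (k+1) → ℂ) (i : Fin (k+1)),
      coeff (DD n i.1) (PhiC n k a) = a i := by
    intro a i
    rw [hPhi_coeff]
    rw [Finset.sum_eq_single i]
    · simp
    · intro j _ hji
      rw [if_neg (fun h => hji (hDD_inj _ _ h))]
      ring
    · intro h
      exact absurd (Finset.mem_univ i) h
  have hPhi_inj : Function.Injective (PhiC n k) := by
    rw [injective_iff_map_eq_zero]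
    intro a ha
    funext i
    have := hPhi_coeff_at a i
    rw [ha] at this
    simpa using this.symm
  have hexpand : ∀ (F : MvPolynomial (Fin 2) ℂ →ₗ[ℂ] MvPolynomial (Fin 2) ℂ) (x y : ℂ)
      (a : Fin (k+1) → ℂ),
      evalAt x y (F (PhiC n k a)) = ∑ i : Fin (k+1), a i • evalAt x y (F (eC n i.1)) := by
    intro F x y a
    simp only [PhiC, LinearMap.coe_mk, AddHom.coe_mk, map_sum, map_smul]
  have h2ile : ∀ i : Fin (k+1), 2 * i.1 ≤ n := fun i => by omega
  -- the submodule equality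
  have key : (MvPolynomial.homogeneousSubmodule (Fin 2) ℂ n ⊓ quasiC m l ξ ⊓
      suppOn {d | Even (d 0) ∧ Even (d 1)})
      = Submodule.map (PhiC n k) (LinearMap.ker (psiC n k ξ)) := by
    apply le_antisymm
    · intro q hq
      rw [Submodule.mem_inf, Submodule.mem_inf] at hq
      obtain ⟨⟨hhom, hquasi⟩, hsupp⟩ := hq
      rw [mem_homogeneousSubmodule] at hhom
      rw [quasiC, Submodule.mem_inf, Submodule.mem_inf, Submodule.mem_inf] at hquasi
      obtain ⟨⟨⟨_, _⟩, hC⟩, _⟩ := hquasi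
      rw [Submodule.mem_iInf] at hC
      have hC1 := hC 1
      rw [LinearMap.mem_ker, LinearMap.comp_apply] at hC1
      have hsupp' : ∀ d ∉ {d : Fin 2 →₀ ℕ | Even (d 0) ∧ Even (d 1)}, coeff d q = 0 := hsupp
      set a : Fin (k+1) → ℂ := fun i => coeff (DD n i.1) q with ha
      have hq : q = PhiC n k a := by
        apply MvPolynomial.ext
        intro d
        by_cases hex : ∃ i : Fin (k+1), DD n i.1 = d
        · obtain ⟨i, rfl⟩ := hex
          rw [hPhi_coeff_at]
        · push_neg at hex
          rw [hPhi_coeff]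
          rw [Finset.sum_eq_zero (fun i _ => by rw [if_neg (hex i)]; ring)]
          by_cases hs : d ∈ {d : Fin 2 →₀ ℕ | Even (d 0) ∧ Even (d 1)}
          · obtain ⟨⟨i0, hi0⟩, he1⟩ := hs
            by_cases hdeg : d 0 + d 1 = n
            · exfalso
              have hi0k : i0 < k + 1 := by omega
              apply hex ⟨i0, hi0k⟩
              rw [DD]
              conv_rhs => rw [fin2_finsupp d]
              congr 1
              · congr 1; simp only [Fin.val_mk]; omega
              · congr 1; simp only [Fin.val_mk]; omega
            · exact hhom.coeff_eq_zero (by rw [fin2_deg]; exact hdeg)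
          · exact hsupp' d hs
      refine ⟨a, ?_, hq.symm⟩
      show psiC n k ξ a = 0
      rw [hq, hexpand] at hC1
      rw [← hC1]
      simp only [psiC, LinearMap.coe_mk, AddHom.coe_mk]
      refine Finset.sum_congr rfl fun i _ => ?_
      rw [mirrorA ξ 1 n i.1 ⟨w, hw⟩ (h2ile i) hn0, one_pow, smul_eq_mul, one_mul]
    · rintro q ⟨a, haker, rfl⟩
      have hpsi : ∑ i : Fin (k+1), a i * cC n ξ i.1 = 0 := haker
      rw [Submodule.mem_inf, Submodule.mem_inf]
      refine ⟨⟨?_, ?_⟩, ?_⟩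
      · -- homogeneous
        show (∑ i : Fin (k+1), a i • eC n i.1) ∈ homogeneousSubmodule (Fin 2) ℂ n
        apply Submodule.sum_mem
        intro i _
        apply Submodule.smul_mem
        rw [mem_homogeneousSubmodule]
        have h := (isHomogeneous_X_pow (R := ℂ) (0 : Fin 2) (2*i.1)).mul
          (isHomogeneous_X_pow (R := ℂ) (1 : Fin 2) (n - 2*i.1))
        rw [show 2*i.1 + (n - 2*i.1) = n by omega] at h
        exact h
      · -- quasi-invariance
        rw [quasiC, Submodule.mem_inf, Submodule.mem_inf, Submodule.mem_inf]
        refine ⟨⟨⟨?_, ?_⟩, ?_⟩, ?_⟩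
        · rw [Submodule.mem_iInf]
          intro r
          rw [Submodule.mem_iInf]
          intro hr
          rw [Submodule.mem_iInf]
          intro y
          rw [LinearMap.mem_ker, LinearMap.comp_apply]
          rw [hexpand]
          apply Finset.sum_eq_zero
          intro i _
          rw [eC_eq_monomial, evalzero_pderiv_iter y (2*r-1) (DD n i.1) 1 ?_, smul_zero]
          rw [DD_zero]
          rw [Finset.mem_Icc] at hr
          omega
        · rw [Submodule.mem_iInf]
          intro r
          rw [Submodule.mem_iInf]
          intro hr
          rw [Submodule.mem_iInf]
          intro x
          rw [LinearMap.mem_ker, LinearMap.comp_apply]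
          rw [hexpand]
          apply Finset.sum_eq_zero
          intro i _
          rw [eC_eq_monomial, evalzero_pderiv_iter' x (2*r-1) (DD n i.1) 1 ?_, smul_zero]
          rw [DD_one]
          rw [Finset.mem_Icc] at hr
          have := h2ile i
          omega
        · rw [Submodule.mem_iInf]
          intro t
          rw [LinearMap.mem_ker, LinearMap.comp_apply, hexpand]
          calc ∑ i : Fin (k+1), a i • evalAt t (-(ξ*t)) (dirD ξ 1 (eC n i.1))
              = ∑ i : Fin (k+1), t^(n-1) * (a i * cC n ξ i.1) := by
                refine Finset.sum_congr rfl fun i _ => ?_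
                rw [mirrorA ξ t n i.1 ⟨w, hw⟩ (h2ile i) hn0, smul_eq_mul]
                ring
            _ = t^(n-1) * ∑ i : Fin (k+1), a i * cC n ξ i.1 := by rw [Finset.mul_sum]
            _ = 0 := by rw [hpsi, mul_zero]
        · rw [Submodule.mem_iInf]
          intro t
          rw [LinearMap.mem_ker, LinearMap.comp_apply, hexpand]
          calc ∑ i : Fin (k+1), a i • evalAt t (ξ*t) (dirD ξ (-1) (eC n i.1))
              = ∑ i : Fin (k+1), t^(n-1) * (a i * cC n ξ i.1) := by
                refine Finset.sum_congr rfl fun i _ => ?_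
                rw [mirrorB ξ t n i.1 ⟨w, hw⟩ (h2ile i) hn0, smul_eq_mul]
                ring
            _ = t^(n-1) * ∑ i : Fin (k+1), a i * cC n ξ i.1 := by rw [Finset.mul_sum]
            _ = 0 := by rw [hpsi, mul_zero]
      · -- support
        intro d hd
        rw [hPhi_coeff]
        apply Finset.sum_eq_zero
        intro i _
        rw [if_neg, mul_zero]
        intro hdd
        apply hd
        rw [← hdd]
        exact ⟨⟨i.1, by rw [DD_zero]; ring⟩, ⟨k - i.1, by rw [DD_one]; omega⟩⟩
  rw [key]
  -- dimension count
  rw [LinearEquiv.finrank_eq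
    (Submodule.equivMapOfInjective _ hPhi_inj (LinearMap.ker (psiC n k ξ))).symm]
  have hsurj : Function.Surjective (psiC n k ξ) := by
    intro z
    refine ⟨Pi.single (Fin.last k) (z / cC n ξ k), ?_⟩
    simp only [psiC, LinearMap.coe_mk, AddHom.coe_mk]
    rw [Finset.sum_eq_single (Fin.last k)]
    · rw [Pi.single_eq_same, Fin.val_last]
      exact div_mul_cancel₀ z hckne
    · intro j _ hj
      rw [Pi.single_eq_of_ne hj]
      ring
    · intro h; exact absurd (Finset.mem_univ _) h
  have hrn := LinearMap.finrank_range_add_finrank_ker (psiC n k ξ)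
  rw [LinearMap.range_eq_top.mpr hsurj] at hrn
  simp only [finrank_top, Module.finrank_self] at hrn
  have hpi : Module.finrank ℂ (Fin (k+1) → ℂ) = k + 1 := by
    simp [Module.finrank_pi]
  rw [hpi] at hrn
  omega
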